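/- Identity for the averaged nonlinearity error: for φ ∈ C¹([0,T], Σ^m) with m ≥ 2, F(s/ε², φ(s)) - F_av(φ(s)) = ε² ∂_s(∫₀^{s/ε²}(F(τ,φ(s)) - F_av(φ(s)))dτ) - ε² ∫₀^{s/ε²} ∂_s(F(τ,φ(s)) - F_av(φ(s)))dτ, and consequently ‖∫₀^t (F(s/ε², φ(s)) - F_av(φ(s)))ds‖_{L²} ≲ ε²(1+t) sup_{s∈[0,t]}(‖φ(s)‖_{Σ^m}^{2σ+1} + ‖φ(s)‖_{Σ^m}^{2σ}‖∂_s φ(s)‖_{Σ^m}). -/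

import Mathlib

open MeasureTheory Set


/-- Differentiation under the interval integral sign for jointly continuous data. -/
lemma param_hasDerivAt {X : Type*} [NormedAddCommGroup X] [NormedSpace ℝ X] [CompleteSpace X]
    {K K' : ℝ → ℝ → X}
    (hKc : Continuous (fun q : ℝ × ℝ => K q.1 q.2))
    (hKd : ∀ τ s, HasDerivAt (fun r => K τ r) (K' τ s) s)
    (hK'c : Continuous (fun q : ℝ × ℝ => K' q.1 q.2))
    (a c s₀ : ℝ) :
    HasDerivAt (fun s => ∫ τ in a..c, K τ s) (∫ τ in a..c, K' τ s₀) s₀ := by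
  obtain ⟨M, hM⟩ := ((isCompact_uIcc (a := a) (b := c)).prod
    (isCompact_closedBall s₀ 1)).exists_bound_of_continuousOn hK'c.continuousOn
  have hcont1 : ∀ x : ℝ, Continuous fun τ => K τ x := fun x =>
    hKc.comp (continuous_id.prodMk continuous_const)
  have hcont2 : ∀ x : ℝ, Continuous fun τ => K' τ x := fun x =>
    hK'c.comp (continuous_id.prodMk continuous_const)
  refine (intervalIntegral.hasDerivAt_integral_of_dominated_loc_of_deriv_le
    (F := fun s τ => K τ s) (F' := fun s τ => K' τ s) (bound := fun _ => M)
    (Metric.ball_mem_nhds s₀ one_pos) ?_ ?_ ?_ ?_ ?_ ?_).2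
  · filter_upwards with x
    exact (hcont1 x).aestronglyMeasurable
  · exact ((hcont1 s₀).intervalIntegrable a c)
  · exact (hcont2 s₀).aestronglyMeasurable
  · filter_upwards with τ
    intro hτ x hx
    exact hM (τ, x) ⟨uIoc_subset_uIcc hτ, Metric.ball_subset_closedBall hx⟩
  · exact intervalIntegrable_const
  · filter_upwards with τ
    intro hτ x hx
    exact hKd τ x

/-- A continuous periodic function with zero average has uniformly bounded primitive. -/
lemma periodic_primitive_bound {X : Type*} [NormedAddCommGroup X] [NormedSpace ℝ X]
    [CompleteSpace X] {f : ℝ → X} (hf : Continuous f) {T : ℝ} (hT : 0 < T)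
    (hper : Function.Periodic f T) (hzero : ∫ τ in (0:ℝ)..T, f τ = 0)
    {M : ℝ} (hM : ∀ τ, ‖f τ‖ ≤ M) (r : ℝ) : ‖∫ τ in (0:ℝ)..r, f τ‖ ≤ T * M := by
  have hint : ∀ t₁ t₂ : ℝ, IntervalIntegrable f volume t₁ t₂ := fun t₁ t₂ =>
    hf.intervalIntegrable _ _
  set n : ℤ := ⌊r / T⌋ with hn
  have h1 : ∫ τ in (0:ℝ)..(0 + n • T), f τ = n • ∫ τ in (0:ℝ)..(0 + T), f τ :=
    hper.intervalIntegral_add_zsmul_eq n 0 hint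
  have h1' : ∫ τ in (0:ℝ)..((n : ℝ) * T), f τ = 0 := by
    simpa [zsmul_eq_mul, hzero] using h1
  have hsplit : ∫ τ in (0:ℝ)..r, f τ =
      (∫ τ in (0:ℝ)..((n : ℝ) * T), f τ) + ∫ τ in ((n : ℝ) * T)..r, f τ :=
    (intervalIntegral.integral_add_adjacent_intervals (hint _ _) (hint _ _)).symm
  have hnT_le : (n : ℝ) * T ≤ r := by
    have := Int.floor_le (r / T)
    rw [hn]
    calc (⌊r / T⌋ : ℝ) * T ≤ (r / T) * T := by nlinarith
    _ = r := div_mul_cancel₀ r hT.ne'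
  have hr_lt : r < (n : ℝ) * T + T := by
    have := Int.lt_floor_add_one (r / T)
    have h2 : r / T * T < ((⌊r / T⌋ : ℝ) + 1) * T := by nlinarith
    rw [hn]
    calc r = r / T * T := (div_mul_cancel₀ r hT.ne').symm
    _ < ((⌊r / T⌋ : ℝ) + 1) * T := h2
    _ = (⌊r / T⌋ : ℝ) * T + T := by ring
  have hM0 : 0 ≤ M := le_trans (norm_nonneg _) (hM 0)
  calc ‖∫ τ in (0:ℝ)..r, f τ‖ = ‖∫ τ in ((n : ℝ) * T)..r, f τ‖ := by rw [hsplit, h1', zero_add]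
  _ ≤ M * |r - (n : ℝ) * T| :=
      intervalIntegral.norm_integral_le_of_norm_le_const (fun x _ => hM x)
  _ ≤ M * T := by
      have : |r - (n : ℝ) * T| ≤ T := by
        rw [abs_of_nonneg (by linarith)]; linarith
      nlinarith
  _ = T * M := mul_comm _ _

/-- Averaging identity and estimate for the nonlinearity error (Section 5): with
`K(τ,s) = F(τ,φ(s)) - F_av(φ(s))` (`2π/b`-periodic in `τ` with zero average,
`C¹` in `s` with derivative `K'`), `Nφ s`, `N∂ s` standing for `‖φ(s)‖_{Σ^m}` and
`‖∂_s φ(s)‖_{Σ^m}`, and the Moser-type bounds `‖K(τ,s)‖ ≤ C₀ Nφ(s)^{2σ+1}`,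
`‖K'(τ,s)‖ ≤ C₀ Nφ(s)^{2σ} N∂(s)`, one has the identity
`K(s/ε²,s) = ε² ∂_s(∫₀^{s/ε²} K(τ,s)dτ) - ε² ∫₀^{s/ε²} K'(τ,s)dτ` and consequently
`‖∫₀^t K(s/ε²,s)ds‖ ≲ ε²(1+t) sup_{s∈[0,t]}(Nφ^{2σ+1} + Nφ^{2σ}N∂)`. -/
theorem averaged_nonlinearity_error {X : Type*} [NormedAddCommGroup X] [NormedSpace ℝ X]
    [CompleteSpace X] (b : ℝ) (hb : 0 < b) (σ : ℕ) (C₀ : ℝ) (hC₀ : 0 < C₀) :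
    ∃ C > 0, ∀ (K K' : ℝ → ℝ → X) (Nphi Nd : ℝ → ℝ) (B t eps : ℝ),
      (∀ s, Function.Periodic (fun τ => K τ s) (2 * Real.pi / b)) →
      (∀ s, ∫ τ in (0:ℝ)..(2 * Real.pi / b), K τ s = 0) →
      Continuous (fun q : ℝ × ℝ => K q.1 q.2) →
      (∀ τ s, HasDerivAt (fun r => K τ r) (K' τ s) s) →
      Continuous (fun q : ℝ × ℝ => K' q.1 q.2) →
      (∀ s, 0 ≤ Nphi s) → (∀ s, 0 ≤ Nd s) →
      (∀ τ s, ‖K τ s‖ ≤ C₀ * Nphi s ^ (2 * σ + 1)) →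
      (∀ τ s, ‖K' τ s‖ ≤ C₀ * Nphi s ^ (2 * σ) * Nd s) →
      (∀ s ∈ Set.Icc (0:ℝ) t, Nphi s ^ (2 * σ + 1) + Nphi s ^ (2 * σ) * Nd s ≤ B) →
      0 < eps → 0 ≤ t →
      (∀ s : ℝ, K (s / eps ^ 2) s =
          eps ^ 2 • deriv (fun r => ∫ τ in (0:ℝ)..(r / eps ^ 2), K τ r) s -
            eps ^ 2 • ∫ τ in (0:ℝ)..(s / eps ^ 2), K' τ s) ∧
      ‖∫ s in (0:ℝ)..t, K (s / eps ^ 2) s‖ ≤ C * eps ^ 2 * (1 + t) * B := by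
  have hT : 0 < 2 * Real.pi / b := by positivity
  set T : ℝ := 2 * Real.pi / b with hT_def
  refine ⟨2 * T * C₀, by positivity, ?_⟩
  intro K K' Nphi Nd B t eps hper hzero hKc hKd hK'c hNphi hNd hKb hK'b hB heps ht
  have heps2 : (0:ℝ) < eps ^ 2 := by positivity
  have hcont1 : ∀ x : ℝ, Continuous fun τ => K τ x := fun x =>
    hKc.comp (continuous_id.prodMk continuous_const)
  have hcont2 : ∀ x : ℝ, Continuous fun τ => K' τ x := fun x =>
    hK'c.comp (continuous_id.prodMk continuous_const)
  have hint : ∀ (x : ℝ) (t₁ t₂ : ℝ), IntervalIntegrable (fun τ => K τ x) volume t₁ t₂ :=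
    fun x t₁ t₂ => (hcont1 x).intervalIntegrable _ _
  -- periodicity and zero average of K'
  have hK'per : ∀ s, Function.Periodic (fun τ => K' τ s) T := by
    intro s τ
    have h1 := hKd (τ + T) s
    have h2 : (fun r => K (τ + T) r) = fun r => K τ r := by
      funext r; exact hper r τ
    rw [h2] at h1
    exact h1.unique (hKd τ s)
  have hK'zero : ∀ s, ∫ τ in (0:ℝ)..T, K' τ s = 0 := by
    intro s
    have h1 : HasDerivAt (fun s => ∫ τ in (0:ℝ)..T, K τ s) (∫ τ in (0:ℝ)..T, K' τ s) s :=
      param_hasDerivAt hKc hKd hK'c 0 T s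
    have h2 : (fun s => ∫ τ in (0:ℝ)..T, K τ s) = fun _ => (0 : X) := by
      funext r; exact hzero r
    rw [h2] at h1
    exact h1.unique (hasDerivAt_const s 0)
  -- the remainder term has derivative zero
  have hR : ∀ s₀ : ℝ, HasDerivAt
      (fun s => ∫ τ in (s₀ / eps ^ 2)..(s / eps ^ 2), (K τ s - K τ s₀)) 0 s₀ := by
    intro s₀
    obtain ⟨L, hL⟩ := ((isCompact_Icc (a := s₀ / eps ^ 2 - 1 / eps ^ 2)
      (b := s₀ / eps ^ 2 + 1 / eps ^ 2)).prod
      (isCompact_closedBall s₀ 1)).exists_bound_of_continuousOn hK'c.continuousOn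
    have key : ∀ s ∈ Metric.ball s₀ 1,
        ‖∫ τ in (s₀ / eps ^ 2)..(s / eps ^ 2), (K τ s - K τ s₀)‖ ≤
          L / eps ^ 2 * (|s - s₀| * |s - s₀|) := by
      intro s hs
      have hd : |s - s₀| < 1 := by
        rw [Metric.mem_ball, Real.dist_eq] at hs; exact hs
      have hmem : ∀ x : ℝ, |x - s₀| ≤ 1 → x / eps ^ 2 ∈
          Icc (s₀ / eps ^ 2 - 1 / eps ^ 2) (s₀ / eps ^ 2 + 1 / eps ^ 2) := by
        intro x hxd
        rw [abs_le] at hxd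
        constructor
        · have h : (s₀ - 1) / eps ^ 2 ≤ x / eps ^ 2 := by gcongr; linarith [hxd.1]
          rw [sub_div] at h; linarith
        · have h : x / eps ^ 2 ≤ (s₀ + 1) / eps ^ 2 := by gcongr; linarith [hxd.2]
          rw [add_div] at h; linarith
      have hsub : uIcc (s₀ / eps ^ 2) (s / eps ^ 2) ⊆
          Icc (s₀ / eps ^ 2 - 1 / eps ^ 2) (s₀ / eps ^ 2 + 1 / eps ^ 2) :=
        uIcc_subset_Icc (hmem s₀ (by simp)) (hmem s hd.le)
      have hpt : ∀ τ ∈ uIoc (s₀ / eps ^ 2) (s / eps ^ 2),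
          ‖K τ s - K τ s₀‖ ≤ L * |s - s₀| := by
        intro τ hτ
        have hτ' := hsub (uIoc_subset_uIcc hτ)
        have := (convex_closedBall s₀ 1).norm_image_sub_le_of_norm_hasDerivWithin_le
          (f := fun r => K τ r) (f' := fun r => K' τ r)
          (fun x _ => (hKd τ x).hasDerivWithinAt)
          (fun x hx => hL (τ, x) ⟨hτ', hx⟩)
          (Metric.mem_closedBall_self zero_le_one)
          (Metric.mem_closedBall.2 (le_of_lt (by rwa [Real.dist_eq])))
        simpa [Real.norm_eq_abs] using this
      calc ‖∫ τ in (s₀ / eps ^ 2)..(s / eps ^ 2), (K τ s - K τ s₀)‖ ≤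
          (L * |s - s₀|) * |s / eps ^ 2 - s₀ / eps ^ 2| :=
            intervalIntegral.norm_integral_le_of_norm_le_const hpt
      _ = L / eps ^ 2 * (|s - s₀| * |s - s₀|) := by
          have h : s / eps ^ 2 - s₀ / eps ^ 2 = (s - s₀) / eps ^ 2 := by ring
          rw [h, abs_div, abs_of_pos heps2]; ring
    rw [hasDerivAt_iff_isLittleO]
    simp only [intervalIntegral.integral_same, sub_zero, smul_zero]
    refine Asymptotics.IsBigO.trans_isLittleO ?_
      (g := fun s : ℝ => (s - s₀) * (s - s₀)) ?_
    · refine Asymptotics.isBigO_iff.2 ⟨L / eps ^ 2, ?_⟩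
      filter_upwards [Metric.ball_mem_nhds s₀ one_pos] with s hs
      calc ‖∫ τ in (s₀ / eps ^ 2)..(s / eps ^ 2), (K τ s - K τ s₀)‖ ≤
          L / eps ^ 2 * (|s - s₀| * |s - s₀|) := key s hs
      _ = L / eps ^ 2 * ‖(s - s₀) * (s - s₀)‖ := by
          rw [norm_mul, Real.norm_eq_abs]
    · have h1 : (fun s : ℝ => s - s₀) =o[nhds s₀] (fun _ => (1:ℝ)) :=
        (Asymptotics.isLittleO_one_iff ℝ).2
          (by simpa using Filter.Tendsto.sub_const (Filter.tendsto_id (x := nhds s₀)) s₀)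
      simpa using h1.mul_isBigO (Asymptotics.isBigO_refl (fun s : ℝ => s - s₀) (nhds s₀))
  -- derivative of the moving-endpoint integral
  have hPhi : ∀ s₀ : ℝ, HasDerivAt (fun r => ∫ τ in (0:ℝ)..(r / eps ^ 2), K τ r)
      ((eps ^ 2)⁻¹ • K (s₀ / eps ^ 2) s₀ + ∫ τ in (0:ℝ)..(s₀ / eps ^ 2), K' τ s₀) s₀ := by
    intro s₀
    have hA : HasDerivAt (fun s : ℝ => ∫ τ in (0:ℝ)..(s / eps ^ 2), K τ s₀)
        ((eps ^ 2)⁻¹ • K (s₀ / eps ^ 2) s₀) s₀ := by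
      have h1 : HasDerivAt (fun r : ℝ => ∫ τ in (0:ℝ)..r, K τ s₀)
          (K (s₀ / eps ^ 2) s₀) (s₀ / eps ^ 2) :=
        ((hcont1 s₀).integral_hasStrictDerivAt 0 (s₀ / eps ^ 2)).hasDerivAt
      have h2 : HasDerivAt (fun s : ℝ => s / eps ^ 2) ((eps ^ 2)⁻¹) s₀ := by
        simpa [one_div] using (hasDerivAt_id s₀).div_const (eps ^ 2)
      exact h1.scomp s₀ h2
    have hD : HasDerivAt (fun s => ∫ τ in (0:ℝ)..(s₀ / eps ^ 2), K τ s)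
        (∫ τ in (0:ℝ)..(s₀ / eps ^ 2), K' τ s₀) s₀ :=
      param_hasDerivAt hKc hKd hK'c 0 (s₀ / eps ^ 2) s₀
    have hsum := (hA.add ((hD.sub_const (∫ τ in (0:ℝ)..(s₀ / eps ^ 2), K τ s₀)).add (hR s₀)))
    have hEq : ∀ s : ℝ, ((∫ τ in (0:ℝ)..(s / eps ^ 2), K τ s₀) +
        (((∫ τ in (0:ℝ)..(s₀ / eps ^ 2), K τ s) - ∫ τ in (0:ℝ)..(s₀ / eps ^ 2), K τ s₀) +
          ∫ τ in (s₀ / eps ^ 2)..(s / eps ^ 2), (K τ s - K τ s₀))) =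
        ∫ τ in (0:ℝ)..(s / eps ^ 2), K τ s := by
      intro s
      rw [intervalIntegral.integral_sub (hint s _ _) (hint s₀ _ _)]
      rw [← intervalIntegral.integral_add_adjacent_intervals (hint s 0 (s₀ / eps ^ 2))
        (hint s (s₀ / eps ^ 2) (s / eps ^ 2)),
        ← intervalIntegral.integral_add_adjacent_intervals (hint s₀ 0 (s₀ / eps ^ 2))
        (hint s₀ (s₀ / eps ^ 2) (s / eps ^ 2))]
      abel
    have := hsum.congr_of_eventuallyEq (Filter.Eventually.of_forall fun s => (hEq s).symm)
    simpa using this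
  -- the identity
  have hident : ∀ s : ℝ, K (s / eps ^ 2) s =
      eps ^ 2 • deriv (fun r => ∫ τ in (0:ℝ)..(r / eps ^ 2), K τ r) s -
        eps ^ 2 • ∫ τ in (0:ℝ)..(s / eps ^ 2), K' τ s := by
    intro s
    rw [(hPhi s).deriv, smul_add, smul_inv_smul₀ heps2.ne']
    abel
  refine ⟨hident, ?_⟩
  -- the estimate
  have hB0 : 0 ≤ B := le_trans (add_nonneg (pow_nonneg (hNphi 0) _)
    (mul_nonneg (pow_nonneg (hNphi 0) _) (hNd 0))) (hB 0 ⟨le_refl 0, ht⟩)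
  set g : ℝ → X := fun s => ∫ τ in (0:ℝ)..(s / eps ^ 2), K' τ s with hg_def
  have hgc : Continuous g := by
    have : Continuous (Function.uncurry fun (s τ : ℝ) => K' τ s) :=
      hK'c.comp continuous_swap
    exact intervalIntegral.continuous_parametric_intervalIntegral_of_continuous this
      (continuous_id.div_const (eps ^ 2))
  have hfc : Continuous fun s => (eps ^ 2)⁻¹ • K (s / eps ^ 2) s + g s :=
    ((hKc.comp ((continuous_id.div_const (eps ^ 2)).prodMk continuous_id)).const_smul _).add hgc
  have hKsc : Continuous fun s => K (s / eps ^ 2) s :=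
    hKc.comp ((continuous_id.div_const (eps ^ 2)).prodMk continuous_id)
  have hFTC : ∫ s in (0:ℝ)..t, ((eps ^ 2)⁻¹ • K (s / eps ^ 2) s + g s) =
      (∫ τ in (0:ℝ)..(t / eps ^ 2), K τ t) - ∫ τ in (0:ℝ)..((0:ℝ) / eps ^ 2), K τ 0 :=
    intervalIntegral.integral_eq_sub_of_hasDerivAt (fun s _ => hPhi s)
      (hfc.intervalIntegrable _ _)
  have hsplit : ∫ s in (0:ℝ)..t, K (s / eps ^ 2) s =
      eps ^ 2 • ((∫ τ in (0:ℝ)..(t / eps ^ 2), K τ t) -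
        ∫ τ in (0:ℝ)..((0:ℝ) / eps ^ 2), K τ 0) - eps ^ 2 • ∫ s in (0:ℝ)..t, g s := by
    calc ∫ s in (0:ℝ)..t, K (s / eps ^ 2) s
        = ∫ s in (0:ℝ)..t, (eps ^ 2 • ((eps ^ 2)⁻¹ • K (s / eps ^ 2) s + g s) -
            eps ^ 2 • g s) := by
          refine intervalIntegral.integral_congr fun s _ => ?_
          rw [smul_add, smul_inv_smul₀ heps2.ne']
          abel
      _ = (∫ s in (0:ℝ)..t, eps ^ 2 • ((eps ^ 2)⁻¹ • K (s / eps ^ 2) s + g s)) -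
            ∫ s in (0:ℝ)..t, eps ^ 2 • g s :=
          intervalIntegral.integral_sub
            ((hfc.const_smul (eps ^ 2)).intervalIntegrable _ _)
            ((hgc.const_smul (eps ^ 2)).intervalIntegrable _ _)
      _ = eps ^ 2 • (∫ s in (0:ℝ)..t, ((eps ^ 2)⁻¹ • K (s / eps ^ 2) s + g s)) -
            eps ^ 2 • ∫ s in (0:ℝ)..t, g s := by
          rw [intervalIntegral.integral_smul, intervalIntegral.integral_smul]
      _ = _ := by rw [hFTC]
  -- bounds
  have hPhiBound : ∀ r ∈ Icc (0:ℝ) t, ‖∫ τ in (0:ℝ)..(r / eps ^ 2), K τ r‖ ≤ T * (C₀ * B) := by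
    intro r hr
    have h1 : ‖∫ τ in (0:ℝ)..(r / eps ^ 2), K τ r‖ ≤ T * (C₀ * Nphi r ^ (2 * σ + 1)) :=
      periodic_primitive_bound (hcont1 r) hT (hper r) (hzero r) (fun τ => hKb τ r) _
    refine h1.trans ?_
    have h2 : Nphi r ^ (2 * σ + 1) ≤ B := by
      have := hB r hr
      nlinarith [pow_nonneg (hNphi r) (2 * σ), hNd r, hNphi r]
    exact mul_le_mul_of_nonneg_left (mul_le_mul_of_nonneg_left h2 hC₀.le) hT.le
  have hgBound : ∀ s ∈ Icc (0:ℝ) t, ‖g s‖ ≤ T * (C₀ * B) := by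
    intro s hs
    have h1 : ‖g s‖ ≤ T * (C₀ * Nphi s ^ (2 * σ) * Nd s) :=
      periodic_primitive_bound (hcont2 s) hT (hK'per s) (hK'zero s) (fun τ => hK'b τ s) _
    have h2 : Nphi s ^ (2 * σ) * Nd s ≤ B := by
      have := hB s hs
      nlinarith [pow_nonneg (hNphi s) (2 * σ + 1)]
    calc ‖g s‖ ≤ T * (C₀ * Nphi s ^ (2 * σ) * Nd s) := h1
    _ = T * (C₀ * (Nphi s ^ (2 * σ) * Nd s)) := by ring
    _ ≤ T * (C₀ * B) := mul_le_mul_of_nonneg_left (mul_le_mul_of_nonneg_left h2 hC₀.le) hT.le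
  have hgInt : ‖∫ s in (0:ℝ)..t, g s‖ ≤ T * (C₀ * B) * t := by
    have := intervalIntegral.norm_integral_le_of_norm_le_const (C := T * (C₀ * B))
      (f := g) (a := (0:ℝ)) (b := t)
      (fun s hs => hgBound s (Ioc_subset_Icc_self ((uIoc_of_le ht) ▸ hs)))
    calc ‖∫ s in (0:ℝ)..t, g s‖ ≤ T * (C₀ * B) * |t - 0| := this
    _ = T * (C₀ * B) * t := by rw [sub_zero, abs_of_nonneg ht]
  rw [hsplit]
  have hnorm : ‖eps ^ 2 • ((∫ τ in (0:ℝ)..(t / eps ^ 2), K τ t) -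
      ∫ τ in (0:ℝ)..((0:ℝ) / eps ^ 2), K τ 0) - eps ^ 2 • ∫ s in (0:ℝ)..t, g s‖ ≤
      eps ^ 2 * (‖∫ τ in (0:ℝ)..(t / eps ^ 2), K τ t‖ +
        ‖∫ τ in (0:ℝ)..((0:ℝ) / eps ^ 2), K τ 0‖) + eps ^ 2 * ‖∫ s in (0:ℝ)..t, g s‖ := by
    refine (norm_sub_le _ _).trans ?_
    gcongr
    · rw [norm_smul, Real.norm_eq_abs, abs_of_pos heps2]
      exact mul_le_mul_of_nonneg_left (norm_sub_le _ _) heps2.le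
    · rw [norm_smul, Real.norm_eq_abs, abs_of_pos heps2]
  refine hnorm.trans ?_
  have b1 := hPhiBound t ⟨ht, le_refl t⟩
  have b2 := hPhiBound 0 ⟨le_refl 0, ht⟩
  have hTC : 0 ≤ T * (C₀ * B) := by positivity
  nlinarith [heps2.le, mul_le_mul_of_nonneg_left b1 heps2.le,
    mul_le_mul_of_nonneg_left b2 heps2.le, mul_le_mul_of_nonneg_left hgInt heps2.le,
    mul_nonneg heps2.le (mul_nonneg hTC ht)]
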